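/- Let μ be a free measure on ℕ and ε ∈ (0,1] such that: (i) for every δ < ε, every partition of ℕ into finite sets has a selector of μ-measure at least δ; and (ii) ⟨A_n⟩ is a partition of ℕ into finite sets such that every selector of ⟨A_n⟩ has μ-measure at most ε. Let S be a selector of ⟨A_n⟩ with μ(S) > 0, and define μ↾S by μ↾S(B) = μ(S ∩ B)/μ(S). Then μ↾S is an almost Q-measure; moreover, if μ is additionally a P-measure, then μ↾S is a Q-measure. -/

import Mathlib

open Filter

/-- A finitely additive probability measure defined on all subsets of `ℕ`. -/
def IsMeasure (μ : Set ℕ → ℝ) : Prop :=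
  (∀ A : Set ℕ, 0 ≤ μ A ∧ μ A ≤ 1) ∧ μ Set.univ = 1 ∧
    ∀ A B : Set ℕ, Disjoint A B → μ (A ∪ B) = μ A + μ B

/-- A measure is free if it vanishes on finite sets. -/
def IsFree (μ : Set ℕ → ℝ) : Prop := ∀ A : Set ℕ, A.Finite → μ A = 0

/-- A function is finite-to-one if all fibers are finite. -/
def FinToOne (f : ℕ → ℕ) : Prop := ∀ n : ℕ, (f ⁻¹' {n}).Finite

/-- Rudin-Blass reducibility: `ν ≤_RB μ` via a finite-to-one map. -/
def RBLe (ν μ : Set ℕ → ℝ) : Prop :=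
  ∃ f : ℕ → ℕ, FinToOne f ∧ ∀ A : Set ℕ, μ (f ⁻¹' A) = ν A

/-- Rudin-Keisler reducibility: `ν ≤_RK μ`. -/
def RKLe (ν μ : Set ℕ → ℝ) : Prop :=
  ∃ f : ℕ → ℕ, ∀ A : Set ℕ, μ (f ⁻¹' A) = ν A

/-- A measure is shift invariant if `μ(A + 1) = μ(A)`. -/
def ShiftInvariant (μ : Set ℕ → ℝ) : Prop :=
  ∀ A : Set ℕ, μ ((fun n => n + 1) '' A) = μ A

/-- A measure extends the asymptotic density. -/
def ExtendsDensity (μ : Set ℕ → ℝ) : Prop :=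
  ∀ (A : Set ℕ) (d : ℝ),
    Tendsto (fun n : ℕ => ((A ∩ Set.Iio n).ncard : ℝ) / n) atTop (nhds d) → μ A = d

/-- A partition of `ℕ` indexed by `ℕ`. -/
def IsPartition (A : ℕ → Set ℕ) : Prop :=
  Pairwise (Function.onFun Disjoint A) ∧ (⋃ n, A n) = Set.univ

/-- A selector of a partition: meets each piece in at most one point. -/
def IsSelector (S : Set ℕ) (A : ℕ → Set ℕ) : Prop :=
  ∀ n : ℕ, (S ∩ A n).Subsingleton

/-- A Q-measure: each partition into finite sets has a selector of full measure. -/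
def IsQMeasure (μ : Set ℕ → ℝ) : Prop :=
  ∀ A : ℕ → Set ℕ, IsPartition A → (∀ n, (A n).Finite) →
    ∃ S : Set ℕ, IsSelector S A ∧ μ S = 1

/-- A Q⁺-measure: each partition into finite sets has a selector of positive measure. -/
def IsQPlusMeasure (μ : Set ℕ → ℝ) : Prop :=
  ∀ A : ℕ → Set ℕ, IsPartition A → (∀ n, (A n).Finite) →
    ∃ S : Set ℕ, IsSelector S A ∧ 0 < μ S

/-- A P-measure: each partition has a pseudo-selector of the largest possible measure. -/
def IsPMeasure (μ : Set ℕ → ℝ) : Prop :=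
  ∀ A : ℕ → Set ℕ, IsPartition A →
    ∃ S : Set ℕ, (∀ n, (S ∩ A n).Finite) ∧ μ S = 1 - ∑' n, μ (A n)

/-- A selective measure: each partition has a selector of the largest possible measure. -/
def IsSelectiveMeasure (μ : Set ℕ → ℝ) : Prop :=
  ∀ A : ℕ → Set ℕ, IsPartition A →
    ∃ S : Set ℕ, IsSelector S A ∧ μ S = 1 - ∑' n, μ (A n)

/-- A non-atomic measure: finite partitions into pieces of arbitrarily small measure. -/
def NonAtomic (μ : Set ℕ → ℝ) : Prop :=
  ∀ ε : ℝ, 0 < ε → ∃ (N : ℕ) (P : Fin N → Set ℕ),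
    Pairwise (Function.onFun Disjoint P) ∧ (⋃ i, P i) = Set.univ ∧ ∀ i, μ (P i) < ε

/-- The continuum hypothesis: `2 ^ ℵ₀ = ℵ₁`. -/
def CH : Prop := (2 : Cardinal.{0}) ^ Cardinal.aleph0.{0} = Cardinal.aleph.{0} 1


/-- An almost Q-measure: every partition into finite sets admits selectors of measure
arbitrarily close to 1. -/
def IsAlmostQMeasure (μ : Set ℕ → ℝ) : Prop :=
  ∀ A : ℕ → Set ℕ, IsPartition A → (∀ n, (A n).Finite) →
    ∀ δ : ℝ, δ < 1 → ∃ S : Set ℕ, IsSelector S A ∧ δ < μ S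

private lemma m_nonneg (μ : Set ℕ → ℝ) (hμ : IsMeasure μ) (X : Set ℕ) : 0 ≤ μ X := (hμ.1 X).1

private lemma m_add (μ : Set ℕ → ℝ) (hμ : IsMeasure μ) {X Y : Set ℕ} (h : Disjoint X Y) :
    μ (X ∪ Y) = μ X + μ Y := hμ.2.2 X Y h

private lemma m_mono (μ : Set ℕ → ℝ) (hμ : IsMeasure μ) {X Y : Set ℕ} (h : X ⊆ Y) :
    μ X ≤ μ Y := by
  have hd : Disjoint X (Y \ X) := Set.disjoint_sdiff_right
  have := m_add μ hμ hd
  rw [Set.union_diff_cancel h] at this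
  have h0 := m_nonneg μ hμ (Y \ X)
  linarith

private lemma m_split (μ : Set ℕ → ℝ) (hμ : IsMeasure μ) (X Y : Set ℕ) :
    μ (X ∩ Y) + μ (X \ Y) = μ X := by
  have hd : Disjoint (X ∩ Y) (X \ Y) :=
    Set.disjoint_sdiff_right.mono_left Set.inter_subset_right
  have := m_add μ hμ hd
  rw [Set.inter_union_diff] at this
  linarith

private lemma m_union_le (μ : Set ℕ → ℝ) (hμ : IsMeasure μ) (X Y : Set ℕ) :
    μ (X ∪ Y) ≤ μ X + μ Y := by
  have hd : Disjoint X (Y \ X) := Set.disjoint_sdiff_right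
  have h1 := m_add μ hμ hd
  have h2 : X ∪ (Y \ X) = X ∪ Y := by rw [Set.union_diff_self]
  have h3 : μ (Y \ X) ≤ μ Y := m_mono μ hμ Set.diff_subset
  rw [h2] at h1
  linarith

private lemma m_compl (μ : Set ℕ → ℝ) (hμ : IsMeasure μ) (X : Set ℕ) : μ Xᶜ = 1 - μ X := by
  have hd : Disjoint X Xᶜ := disjoint_compl_right
  have := m_add μ hμ hd
  rw [Set.union_compl_self] at this
  have h1 := hμ.2.1
  linarith

private lemma m_null (μ : Set ℕ → ℝ) (hμ : IsMeasure μ) {X Y : Set ℕ} (h : X ⊆ Y)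
    (h0 : μ Y = 0) : μ X = 0 :=
  le_antisymm (h0 ▸ m_mono μ hμ h) (m_nonneg μ hμ X)

/-- Exact pseudo-intersections of decreasing sequences, from the P-measure property. -/
private lemma pmeas_liminf (μ : Set ℕ → ℝ) (hμ : IsMeasure μ) (hfree : IsFree μ)
    (hPM : IsPMeasure μ) (Θ : ℕ → Set ℕ) (hdec : ∀ K, Θ (K + 1) ⊆ Θ K) :
    ∃ V : Set ℕ, (∀ K, (V \ Θ K).Finite) ∧ μ V = ⨅ K, μ (Θ K) := by
  classical
  have hchain : ∀ a b : ℕ, a ≤ b → Θ b ⊆ Θ a := by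
    intro a b hab
    induction b, hab using Nat.le_induction with
    | base => exact subset_rfl
    | succ n hn ih => exact (hdec n).trans ih
  set core : Set ℕ := ⋂ K, Θ K with hcore
  set c : ℝ := μ core with hc
  set L : ℝ := ⨅ K, μ (Θ K) with hL
  have hLanti : Antitone (fun n => μ (Θ n)) := by
    intro a b hab
    exact m_mono μ hμ (hchain a b hab)
  have hLbdd : BddBelow (Set.range fun n => μ (Θ n)) := by
    refine ⟨0, ?_⟩
    rintro x ⟨n, rfl⟩
    exact m_nonneg μ hμ _
  have hLtend : Filter.Tendsto (fun n => μ (Θ n)) Filter.atTop (nhds L) :=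
    tendsto_atTop_ciInf hLanti hLbdd
  -- the partition
  set p : ℕ → Set ℕ := fun n =>
    match n with
    | 0 => (Θ 0)ᶜ
    | 1 => core
    | (K + 2) => Θ K \ Θ (K + 1) with hp
  have hp0 : p 0 = (Θ 0)ᶜ := rfl
  have hp1 : p 1 = core := rfl
  have hp2 : ∀ K, p (K + 2) = Θ K \ Θ (K + 1) := fun K => rfl
  have hppart : IsPartition p := by
    constructor
    · intro i j hij
      simp only [Function.onFun]
      rw [Set.disjoint_left]
      intro x hxi hxj
      match i, j with
      | 0, 0 => exact hij rfl
      | 1, 1 => exact hij rfl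
      | 0, 1 =>
        exact hxi (Set.mem_iInter.mp hxj 0)
      | 1, 0 =>
        exact hxj (Set.mem_iInter.mp hxi 0)
      | 0, (K + 2) =>
        exact hxi (hchain 0 K (Nat.zero_le K) hxj.1)
      | (K + 2), 0 =>
        exact hxj (hchain 0 K (Nat.zero_le K) hxi.1)
      | 1, (K + 2) =>
        exact hxj.2 (Set.mem_iInter.mp hxi (K + 1))
      | (K + 2), 1 =>
        exact hxi.2 (Set.mem_iInter.mp hxj (K + 1))
      | (K + 2), (J + 2) =>
        rcases Nat.lt_or_ge K J with h | h
        · exact hxi.2 (hchain (K + 1) J h hxj.1)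
        · rcases Nat.lt_or_ge J K with h' | h'
          · exact hxj.2 (hchain (J + 1) K h' hxi.1)
          · exact hij (by omega)
    · apply Set.eq_univ_of_forall
      intro x
      rw [Set.mem_iUnion]
      by_cases hx0 : x ∈ Θ 0
      · by_cases hxall : ∀ K, x ∈ Θ K
        · exact ⟨1, Set.mem_iInter.mpr hxall⟩
        · push_neg at hxall
          have hex : ∃ K, x ∉ Θ K := hxall
          have hJspec : x ∉ Θ (Nat.find hex) := Nat.find_spec hex
          have hJpos : Nat.find hex ≠ 0 := by
            intro h
            rw [h] at hJspec
            exact hJspec hx0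
          obtain ⟨J', hJ'⟩ : ∃ J', Nat.find hex = J' + 1 := ⟨Nat.find hex - 1, by omega⟩
          rw [hJ'] at hJspec
          refine ⟨J' + 2, ?_, hJspec⟩
          by_contra hmem
          exact Nat.find_min hex (by omega : J' < Nat.find hex) hmem
      · exact ⟨0, hx0⟩
  -- sum of the measures of the pieces
  have hdval : ∀ K, μ (Θ K \ Θ (K + 1)) = μ (Θ K) - μ (Θ (K + 1)) := by
    intro K
    have := m_split μ hμ (Θ K) (Θ (K + 1))
    rw [Set.inter_eq_right.mpr (hdec K)] at this
    linarith
  have hPS : ∀ n, ∑ i ∈ Finset.range (n + 2), μ (p i) = 1 + c - μ (Θ n) := by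
    intro n
    induction n with
    | zero =>
      rw [Finset.sum_range_succ, Finset.sum_range_one, hp0, hp1, m_compl μ hμ]
      ring
    | succ n ih =>
      have : n + 1 + 2 = (n + 2) + 1 := by omega
      rw [this, Finset.sum_range_succ, ih, hp2, hdval]
      ring
  have hnn : ∀ i, 0 ≤ μ (p i) := fun i => m_nonneg μ hμ _
  have hPSle : ∀ n, ∑ i ∈ Finset.range n, μ (p i) ≤ 1 + c := by
    intro n
    have h1 : ∑ i ∈ Finset.range n, μ (p i) ≤ ∑ i ∈ Finset.range (n + 2), μ (p i) := by
      apply Finset.sum_le_sum_of_subset_of_nonneg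
      · exact Finset.range_subset_range.mpr (by omega)
      · intro i _ _; exact hnn i
    have h2 := hPS n
    have h3 := m_nonneg μ hμ (Θ n)
    linarith
  have hsummable : Summable (fun i => μ (p i)) := summable_of_sum_range_le hnn hPSle
  obtain ⟨a, ha⟩ := hsummable
  have hatend : Filter.Tendsto (fun n => ∑ i ∈ Finset.range n, μ (p i))
      Filter.atTop (nhds a) := ha.tendsto_sum_nat
  have hatend2 : Filter.Tendsto (fun n => ∑ i ∈ Finset.range (n + 2), μ (p i))
      Filter.atTop (nhds a) := hatend.comp (Filter.tendsto_add_atTop_nat 2)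
  have hatend3 : Filter.Tendsto (fun n => 1 + c - μ (Θ n)) Filter.atTop (nhds (1 + c - L)) := by
    have := hLtend.const_sub (1 + c)
    exact this
  have haL : a = 1 + c - L := by
    apply tendsto_nhds_unique hatend2
    have : (fun n => ∑ i ∈ Finset.range (n + 2), μ (p i)) = fun n => 1 + c - μ (Θ n) := by
      funext n; exact hPS n
    rw [this]
    exact hatend3
  have htsum : ∑' i, μ (p i) = 1 + c - L := by rw [ha.tsum_eq, haL]
  -- apply the P-measure property
  obtain ⟨X, hXfin, hXμ⟩ := hPM p hppart
  rw [htsum] at hXμ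
  -- build V
  refine ⟨(X \ (p 0 ∪ p 1)) ∪ core, ?_, ?_⟩
  · intro K
    have hsub : ((X \ (p 0 ∪ p 1)) ∪ core) \ Θ K ⊆ ⋃ J ∈ Finset.range K, (X ∩ p (J + 2)) := by
      rintro x ⟨hx, hxK⟩
      rcases hx with ⟨hxX, hxp⟩ | hxcore
      · have hx0 : x ∈ Θ 0 := by
          by_contra h
          exact hxp (Or.inl h)
        have hxncore : x ∉ core := fun h => hxp (Or.inr h)
        have hex : ∃ J, x ∉ Θ J := by
          by_contra h
          push_neg at h
          exact hxncore (Set.mem_iInter.mpr h)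
        have hJspec : x ∉ Θ (Nat.find hex) := Nat.find_spec hex
        have hJpos : Nat.find hex ≠ 0 := fun h => hJspec (h ▸ hx0)
        obtain ⟨J', hJ'⟩ : ∃ J', Nat.find hex = J' + 1 := ⟨Nat.find hex - 1, by omega⟩
        have hxJ' : x ∈ Θ J' := by
          by_contra h
          exact Nat.find_min hex (by omega : J' < Nat.find hex) h
        have hJK : Nat.find hex ≤ K := Nat.find_min' hex hxK
        rw [hJ'] at hJspec hJK
        apply Set.mem_biUnion (show J' ∈ Finset.range K by simp; omega)
        exact ⟨hxX, by rw [hp2]; exact ⟨hxJ', hJspec⟩⟩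
      · exact absurd (Set.mem_iInter.mp hxcore K) hxK
    exact Set.Finite.subset (Set.Finite.biUnion (Finset.range K).finite_toSet
      (fun J _ => hXfin (J + 2))) hsub
  · have hdisj : Disjoint (X \ (p 0 ∪ p 1)) core := by
      rw [Set.disjoint_right]
      intro x hx hx'
      exact hx'.2 (Or.inr hx)
    rw [m_add μ hμ hdisj]
    have hXsplit := m_split μ hμ X (p 0 ∪ p 1)
    have hfin01 : (X ∩ (p 0 ∪ p 1)).Finite := by
      have : X ∩ (p 0 ∪ p 1) = (X ∩ p 0) ∪ (X ∩ p 1) := by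
        rw [Set.inter_union_distrib_left]
      rw [this]
      exact (hXfin 0).union (hXfin 1)
    have h0 : μ (X ∩ (p 0 ∪ p 1)) = 0 := hfree _ hfin01
    have : μ (X \ (p 0 ∪ p 1)) = μ X := by linarith
    rw [this, hXμ, ← hc]
    ring

private lemma le_geom_zero {x c : ℝ} (h0 : 0 ≤ x) (h : ∀ n : ℕ, x ≤ c * (1/2) ^ n) : x = 0 := by
  rcases eq_or_lt_of_le h0 with h' | h'
  · exact h'.symm
  · exfalso
    have hc : 0 < c := by
      have h00 := h 0
      simp only [pow_zero, mul_one] at h00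
      linarith
    obtain ⟨n, hn⟩ := exists_pow_lt_of_lt_one (div_pos h' hc) (by norm_num : (1/2 : ℝ) < 1)
    have hxn := h n
    rw [lt_div_iff₀ hc] at hn
    nlinarith

/-- Exact pair singularity from the P-measure property: if the pair `(P, R)` can be
split by index sets with arbitrarily small error, it can be split exactly. -/
private lemma eps_lemma (μ : Set ℕ → ℝ) (hμ : IsMeasure μ) (hfree : IsFree μ)
    (hPM : IsPMeasure μ) (f : ℕ → ℕ)
    (hffin : ∀ M : Set ℕ, M.Finite → (f ⁻¹' M).Finite) (P R : Set ℕ)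
    (hα : ∀ η : ℝ, 0 < η → ∃ M : Set ℕ, μ (P \ f ⁻¹' M) ≤ η ∧ μ (R ∩ f ⁻¹' M) ≤ η) :
    ∃ M : Set ℕ, μ (R ∩ f ⁻¹' M) = 0 ∧ μ (P \ f ⁻¹' M) = 0 := by
  classical
  -- Step A: for every ε' > 0 there is an index set W with μ(P ∩ f⁻¹ W) = 0 and
  -- μ(R ∩ f⁻¹ W) ≥ μ R - ε'.
  have Wlem : ∀ ε' : ℝ, 0 < ε' →
      ∃ W : Set ℕ, μ (P ∩ f ⁻¹' W) = 0 ∧ μ R - ε' ≤ μ (R ∩ f ⁻¹' W) := by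
    intro ε' hε'
    have hηpos : ∀ k : ℕ, (0:ℝ) < ε' / 2 * (1/2) ^ (k + 1) := by
      intro k
      have : (0:ℝ) < (1/2) ^ (k + 1) := pow_pos (by norm_num) _
      positivity
    choose G hG1 hG2 using fun k => hα (ε' / 2 * (1/2) ^ (k + 1)) (hηpos k)
    set Θ : ℕ → Set ℕ := fun K => {x | x ∈ R ∧ ∀ k ≤ K, f x ∉ G k} with hΘ
    have hΘdec : ∀ K, Θ (K + 1) ⊆ Θ K := by
      rintro K x ⟨hxR, hx⟩
      exact ⟨hxR, fun k hk => hx k (by omega)⟩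
    have hΘR : ∀ K, Θ K ⊆ R := fun K x hx => hx.1
    have hdiffsub : ∀ K, Θ K \ Θ (K + 1) ⊆ R ∩ f ⁻¹' G (K + 1) := by
      rintro K x ⟨⟨hxR, hx⟩, hx'⟩
      refine ⟨hxR, ?_⟩
      by_contra hG
      exact hx' ⟨hxR, fun k hk => by
        rcases Nat.lt_or_ge k (K + 1) with h | h
        · exact hx k (by omega)
        · have : k = K + 1 := by omega
          rw [this]; exact hG⟩
    have hΘrec : ∀ K, μ (Θ K) - ε' / 2 * (1/2) ^ (K + 2) ≤ μ (Θ (K + 1)) := by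
      intro K
      have hsplit := m_split μ hμ (Θ K) (Θ (K + 1))
      rw [Set.inter_eq_right.mpr (hΘdec K)] at hsplit
      have hd : μ (Θ K \ Θ (K + 1)) ≤ ε' / 2 * (1/2) ^ (K + 2) :=
        le_trans (m_mono μ hμ (hdiffsub K)) (hG2 (K + 1))
      linarith
    have hlb : ∀ K, μ R - ε' / 2 * (1 - (1/2) ^ (K + 1)) ≤ μ (Θ K) := by
      intro K
      induction K with
      | zero =>
        have hsplit := m_split μ hμ R (Θ 0)
        rw [Set.inter_eq_right.mpr (hΘR 0)] at hsplit
        have hsub : R \ Θ 0 ⊆ R ∩ f ⁻¹' G 0 := by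
          rintro x ⟨hxR, hx⟩
          refine ⟨hxR, ?_⟩
          by_contra hG
          exact hx ⟨hxR, fun k hk => by
            have : k = 0 := by omega
            rw [this]; exact hG⟩
        have hd : μ (R \ Θ 0) ≤ ε' / 2 * (1/2) ^ 1 := le_trans (m_mono μ hμ hsub) (hG2 0)
        have : ((1:ℝ)/2) ^ (0 + 1) = 1/2 := by norm_num
        rw [this]
        norm_num at hd ⊢
        linarith
      | succ K ih =>
        have h1 := hΘrec K
        have h2 : ((1:ℝ)/2) ^ (K + 2) = (1/2) ^ (K + 1) * (1/2) := by rw [pow_succ]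
        have h3 : ((1:ℝ)/2) ^ (K + 1 + 1) = (1/2) ^ (K + 1) * (1/2) := by rw [pow_succ]
        rw [h3]
        rw [h2] at h1
        linarith
    obtain ⟨V, hVfin, hVμ⟩ := pmeas_liminf μ hμ hfree hPM Θ hΘdec
    have hVlb : μ R - ε' / 2 ≤ μ V := by
      rw [hVμ]
      apply le_ciInf
      intro K
      have := hlb K
      have hpow : (0:ℝ) ≤ (1/2) ^ (K + 1) := pow_nonneg (by norm_num) _
      nlinarith
    set V' : Set ℕ := V ∩ R with hV'
    have hV'sub : ∀ K, V' \ Θ K ⊆ V \ Θ K := fun K =>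
      Set.diff_subset_diff_left Set.inter_subset_left
    have hV'μ : μ V' = μ V := by
      have hsplit := m_split μ hμ V R
      have hVR : V \ R ⊆ V \ Θ 0 := Set.diff_subset_diff_right (hΘR 0)
      have h0 : μ (V \ R) = 0 := hfree _ ((hVfin 0).subset hVR)
      linarith
    refine ⟨f '' V', ?_, ?_⟩
    · -- μ (P ∩ f⁻¹' (f '' V')) = 0
      apply le_geom_zero (m_nonneg μ hμ _) (c := ε')
      intro K
      have hsub : P ∩ f ⁻¹' (f '' V') ⊆ (P \ f ⁻¹' G K) ∪ f ⁻¹' (f '' (V' \ Θ K)) := by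
        rintro x ⟨hxP, hxW⟩
        obtain ⟨y, hyV', hyfx⟩ := hxW
        by_cases hyΘ : y ∈ Θ K
        · left
          refine ⟨hxP, ?_⟩
          show f x ∉ G K
          rw [← hyfx]
          exact hyΘ.2 K le_rfl
        · right
          exact ⟨y, ⟨hyV', hyΘ⟩, hyfx⟩
      have h1 : μ (P ∩ f ⁻¹' (f '' V')) ≤
          μ (P \ f ⁻¹' G K) + μ (f ⁻¹' (f '' (V' \ Θ K))) :=
        le_trans (m_mono μ hμ hsub) (m_union_le μ hμ _ _)
      have h2 : μ (f ⁻¹' (f '' (V' \ Θ K))) = 0 :=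
        hfree _ (hffin _ (((hVfin K).subset (hV'sub K)).image f))
      have h3 := hG1 K
      have hpow : ((1:ℝ)/2) ^ (K + 1) = (1/2) ^ K * (1/2) := by rw [pow_succ]
      have hpnn : (0:ℝ) ≤ (1/2) ^ K := pow_nonneg (by norm_num) _
      rw [hpow] at h3
      nlinarith
    · -- μ R - ε' ≤ μ (R ∩ f⁻¹' (f '' V'))
      have hsub : V' ⊆ R ∩ f ⁻¹' (f '' V') := by
        intro x hx
        exact ⟨hx.2, ⟨x, hx, rfl⟩⟩
      have := m_mono μ hμ hsub
      rw [hV'μ] at this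
      linarith
  -- Step B
  have hWpos : ∀ i : ℕ, (0:ℝ) < (1/2) ^ i := fun i => pow_pos (by norm_num) i
  choose Wi hWi0 hWi1 using fun i => Wlem ((1/2) ^ i) (hWpos i)
  set U : ℕ → Set ℕ := fun I => ⋃ i ∈ Finset.range (I + 1), Wi i with hU
  have hUrec : ∀ I, U (I + 1) = Wi (I + 1) ∪ U I := by
    intro I
    show (⋃ i ∈ Finset.range (I + 1 + 1), Wi i) = Wi (I + 1) ∪ ⋃ i ∈ Finset.range (I + 1), Wi i
    rw [Finset.range_add_one, Finset.set_biUnion_insert]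
  have hWU : ∀ I, Wi I ⊆ U I := by
    intro I x hx
    exact Set.mem_biUnion (Finset.self_mem_range_succ I) hx
  have hUchain : ∀ I J, I ≤ J → U I ⊆ U J := by
    intro I J hIJ
    induction J, hIJ using Nat.le_induction with
    | base => exact subset_rfl
    | succ n hn ih => exact ih.trans (by rw [hUrec]; exact Set.subset_union_right)
  set Ustar : Set ℕ := ⋃ i, Wi i with hUstar
  have hUsub : ∀ I, U I ⊆ Ustar := by
    intro I x hx
    simp only [hU, Set.mem_iUnion] at hx
    obtain ⟨i, _, hx⟩ := hx
    exact Set.mem_iUnion.mpr ⟨i, hx⟩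
  have hUP : ∀ I, μ (P ∩ f ⁻¹' U I) = 0 := by
    intro I
    induction I with
    | zero =>
      apply m_null μ hμ _ (hWi0 0)
      intro x hx
      refine ⟨hx.1, ?_⟩
      have := hx.2
      simp only [hU, Set.mem_preimage, Set.mem_iUnion] at this ⊢
      obtain ⟨i, hi, h⟩ := this
      have : i = 0 := by simpa using hi
      rwa [← this]
    | succ I ih =>
      have hsplit : P ∩ f ⁻¹' U (I + 1) ⊆ (P ∩ f ⁻¹' (Wi (I + 1))) ∪ (P ∩ f ⁻¹' U I) := by
        rw [hUrec, Set.preimage_union]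
        rintro x ⟨hxP, hx⟩
        rcases hx with h | h
        · exact Or.inl ⟨hxP, h⟩
        · exact Or.inr ⟨hxP, h⟩
      have h1 : μ (P ∩ f ⁻¹' U (I + 1)) ≤ μ (P ∩ f ⁻¹' (Wi (I + 1))) + μ (P ∩ f ⁻¹' U I) :=
        le_trans (m_mono μ hμ hsplit) (m_union_le μ hμ _ _)
      have h2 := m_nonneg μ hμ (P ∩ f ⁻¹' U (I + 1))
      rw [hWi0 (I + 1), ih] at h1
      linarith
  have hUR : ∀ I, μ R - (1/2) ^ I ≤ μ (R ∩ f ⁻¹' U I) := by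
    intro I
    refine le_trans (hWi1 I) (m_mono μ hμ ?_)
    exact Set.inter_subset_inter_right R (Set.preimage_mono (hWU I))
  have hRUstar : μ (R ∩ f ⁻¹' Ustar) = μ R := by
    apply le_antisymm (m_mono μ hμ Set.inter_subset_left)
    by_contra h
    push_neg at h
    obtain ⟨n, hn⟩ := exists_pow_lt_of_lt_one (by linarith : (0:ℝ) < μ R - μ (R ∩ f ⁻¹' Ustar))
      (by norm_num : (1/2 : ℝ) < 1)
    have h1 := hUR n
    have h2 : μ (R ∩ f ⁻¹' U n) ≤ μ (R ∩ f ⁻¹' Ustar) :=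
      m_mono μ hμ (Set.inter_subset_inter_right R (Set.preimage_mono (hUsub n)))
    linarith
  -- the ring partition
  set jump : ℝ := μ (P ∩ f ⁻¹' Ustar) with hjump
  set VI : ℕ → Set ℕ := fun I => match I with
    | 0 => U 0
    | (J + 1) => U (J + 1) \ U J with hVI
  have hVIsub : ∀ I, VI I ⊆ U I := by
    intro I
    match I with
    | 0 => exact subset_rfl
    | (J + 1) => exact Set.diff_subset
  set q : ℕ → Set ℕ := fun n => match n with
    | 0 => (P ∩ f ⁻¹' Ustar)ᶜ
    | (I + 1) => P ∩ f ⁻¹' (VI I) with hq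
  have hq0 : q 0 = (P ∩ f ⁻¹' Ustar)ᶜ := rfl
  have hqS : ∀ I, q (I + 1) ⊆ P ∩ f ⁻¹' Ustar := by
    intro I
    rintro x ⟨hxP, hx⟩
    exact ⟨hxP, Set.preimage_mono ((hVIsub I).trans (hUsub I)) hx⟩
  have hqpart : IsPartition q := by
    constructor
    · intro i j hij
      simp only [Function.onFun]
      rw [Set.disjoint_left]
      intro x hxi hxj
      match i, j with
      | 0, 0 => exact hij rfl
      | 0, (J + 1) => exact hxi (hqS J hxj)
      | (I + 1), 0 => exact hxj (hqS I hxi)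
      | (I + 1), (J + 1) =>
        have hne : I ≠ J := fun h => hij (by rw [h])
        rcases Nat.lt_or_ge I J with h | h
        · obtain ⟨J', rfl⟩ : ∃ J', J = J' + 1 := ⟨J - 1, by omega⟩
          have h1 : f x ∈ U I := Set.preimage_mono (hVIsub I) hxi.2
          have h2 : f x ∈ U (J' + 1) \ U J' := hxj.2
          exact h2.2 (hUchain I J' (by omega) h1)
        · have h' : J < I := lt_of_le_of_ne h (Ne.symm hne)
          obtain ⟨I', rfl⟩ : ∃ I', I = I' + 1 := ⟨I - 1, by omega⟩
          have h1 : f x ∈ U J := Set.preimage_mono (hVIsub J) hxj.2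
          have h2 : f x ∈ U (I' + 1) \ U I' := hxi.2
          exact h2.2 (hUchain J I' (by omega) h1)
    · apply Set.eq_univ_of_forall
      intro x
      rw [Set.mem_iUnion]
      by_cases hx : x ∈ P ∩ f ⁻¹' Ustar
      · have hex : ∃ I, f x ∈ U I := by
          have := hx.2
          rw [hUstar] at this
          obtain ⟨i, hi⟩ := Set.mem_iUnion.mp this
          exact ⟨i, hWU i hi⟩
        have hspec := Nat.find_spec hex
        match hI : Nat.find hex with
        | 0 =>
          rw [hI] at hspec
          refine ⟨1, ?_⟩
          show x ∈ P ∩ f ⁻¹' (U 0)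
          exact ⟨hx.1, hspec⟩
        | (J + 1) =>
          rw [hI] at hspec
          have hJ : f x ∉ U J := Nat.find_min hex (by omega)
          refine ⟨J + 2, ?_⟩
          show x ∈ P ∩ f ⁻¹' (U (J + 1) \ U J)
          exact ⟨hx.1, hspec, hJ⟩
      · exact ⟨0, hx⟩
  have hqnull : ∀ n, n ≠ 0 → μ (q n) = 0 := by
    intro n hn
    obtain ⟨I, rfl⟩ : ∃ I, n = I + 1 := ⟨n - 1, by omega⟩
    apply m_null μ hμ _ (hUP I)
    rintro x ⟨hxP, hx⟩
    exact ⟨hxP, Set.preimage_mono (hVIsub I) hx⟩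
  obtain ⟨X, hXfin, hXμ⟩ := hPM q hqpart
  have htsum : ∑' n, μ (q n) = 1 - jump := by
    rw [tsum_eq_single 0 hqnull, hq0, m_compl μ hμ]
  rw [htsum] at hXμ
  have hXval : μ X = jump := by rw [hXμ]; ring
  set X' : Set ℕ := X ∩ (P ∩ f ⁻¹' Ustar) with hX'
  have hX'μ : μ X' = jump := by
    have hsplit := m_split μ hμ X (P ∩ f ⁻¹' Ustar)
    have h0 : μ (X \ (P ∩ f ⁻¹' Ustar)) = 0 := by
      apply hfree
      have : X \ (P ∩ f ⁻¹' Ustar) = X ∩ q 0 := by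
        rw [hq0]
        ext x
        simp only [Set.mem_diff, Set.mem_inter_iff, Set.mem_compl_iff, Set.mem_preimage]
      rw [this]
      exact hXfin 0
    linarith [hXval]
  have hX'P : X' ⊆ P ∩ f ⁻¹' Ustar := Set.inter_subset_right
  have hX'fin : ∀ I, (X' ∩ f ⁻¹' U I).Finite := by
    intro I
    have hsub : X' ∩ f ⁻¹' U I ⊆ ⋃ J ∈ Finset.range (I + 1), (X ∩ q (J + 1)) := by
      rintro x ⟨hxX', hxU⟩
      have hex : ∃ J, f x ∈ U J := ⟨I, hxU⟩
      have hspec := Nat.find_spec hex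
      have hle : Nat.find hex ≤ I := Nat.find_min' hex hxU
      have hxq : x ∈ q (Nat.find hex + 1) := by
        match hI : Nat.find hex with
        | 0 =>
          rw [hI] at hspec
          show x ∈ P ∩ f ⁻¹' (U 0)
          exact ⟨hxX'.2.1, hspec⟩
        | (J + 1) =>
          rw [hI] at hspec
          show x ∈ P ∩ f ⁻¹' (U (J + 1) \ U J)
          exact ⟨hxX'.2.1, hspec, Nat.find_min hex (by omega)⟩
      exact Set.mem_biUnion (Finset.mem_range.mpr (by omega)) ⟨hxX'.1, hxq⟩
    exact Set.Finite.subset (Set.Finite.biUnion (Finset.range (I + 1)).finite_toSet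
      (fun J _ => hXfin (J + 1))) hsub
  set blocksX : Set ℕ := f '' X' with hblocksX
  have hblocksUstar : blocksX ⊆ Ustar := by
    rintro m ⟨x, hx, rfl⟩
    exact hX'P hx |>.2
  have hRB : μ (R ∩ f ⁻¹' blocksX) = 0 := by
    apply le_geom_zero (m_nonneg μ hμ _) (c := 1)
    intro I
    have hsub : R ∩ f ⁻¹' blocksX ⊆
        f ⁻¹' (f '' (X' ∩ f ⁻¹' U I)) ∪ (R ∩ (f ⁻¹' Ustar \ f ⁻¹' U I)) := by
      rintro x ⟨hxR, hxB⟩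
      obtain ⟨y, hyX', hyfx⟩ := hxB
      by_cases hyU : f y ∈ U I
      · left
        exact ⟨y, ⟨hyX', hyU⟩, hyfx⟩
      · right
        refine ⟨hxR, ?_, ?_⟩
        · show f x ∈ Ustar
          rw [← hyfx]
          exact (hX'P hyX').2
        · show f x ∉ U I
          rw [← hyfx]
          exact hyU
    have h1 : μ (R ∩ f ⁻¹' blocksX) ≤
        μ (f ⁻¹' (f '' (X' ∩ f ⁻¹' U I))) + μ (R ∩ (f ⁻¹' Ustar \ f ⁻¹' U I)) :=
      le_trans (m_mono μ hμ hsub) (m_union_le μ hμ _ _)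
    have h2 : μ (f ⁻¹' (f '' (X' ∩ f ⁻¹' U I))) = 0 :=
      hfree _ (hffin _ ((hX'fin I).image f))
    have h3 : μ (R ∩ (f ⁻¹' Ustar \ f ⁻¹' U I)) ≤ (1/2) ^ I := by
      have hsplit := m_split μ hμ (R ∩ f ⁻¹' Ustar) (f ⁻¹' U I)
      have heq1 : R ∩ f ⁻¹' Ustar ∩ f ⁻¹' U I = R ∩ f ⁻¹' U I := by
        ext x
        simp only [Set.mem_inter_iff, Set.mem_preimage, and_assoc]
        constructor
        · rintro ⟨h1, _, h3⟩; exact ⟨h1, h3⟩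
        · rintro ⟨h1, h3⟩; exact ⟨h1, hUsub I h3, h3⟩
      have heq2 : (R ∩ f ⁻¹' Ustar) \ f ⁻¹' U I = R ∩ (f ⁻¹' Ustar \ f ⁻¹' U I) := by
        ext x
        simp only [Set.mem_diff, Set.mem_inter_iff, Set.mem_preimage]
        tauto
      rw [heq1, heq2, hRUstar] at hsplit
      have := hUR I
      linarith
    rw [one_mul]
    linarith
  have hPB : μ (P ∩ f ⁻¹' blocksX) = jump := by
    apply le_antisymm
    · apply m_mono μ hμ
      rintro x ⟨hxP, hx⟩
      exact ⟨hxP, Set.preimage_mono hblocksUstar hx⟩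
    · rw [← hX'μ]
      apply m_mono μ hμ
      intro x hx
      exact ⟨(hX'P hx).1, ⟨x, hx, rfl⟩⟩
  refine ⟨Ustarᶜ ∪ blocksX, ?_, ?_⟩
  · -- μ (R ∩ f⁻¹' (Ustarᶜ ∪ blocksX)) = 0
    have hsub : R ∩ f ⁻¹' (Ustarᶜ ∪ blocksX) ⊆
        (R \ f ⁻¹' Ustar) ∪ (R ∩ f ⁻¹' blocksX) := by
      rintro x ⟨hxR, hx⟩
      rcases hx with h | h
      · exact Or.inl ⟨hxR, h⟩
      · exact Or.inr ⟨hxR, h⟩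
    have h1 : μ (R \ f ⁻¹' Ustar) = 0 := by
      have hsplit := m_split μ hμ R (f ⁻¹' Ustar)
      rw [hRUstar] at hsplit
      linarith
    have h2 := le_trans (m_mono μ hμ hsub) (m_union_le μ hμ _ _)
    rw [h1, hRB] at h2
    have := m_nonneg μ hμ (R ∩ f ⁻¹' (Ustarᶜ ∪ blocksX))
    linarith
  · -- μ (P \ f⁻¹' (Ustarᶜ ∪ blocksX)) = 0
    have heq : P \ f ⁻¹' (Ustarᶜ ∪ blocksX) = (P ∩ f ⁻¹' Ustar) \ f ⁻¹' blocksX := by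
      ext x
      simp only [Set.mem_diff, Set.mem_inter_iff, Set.mem_preimage, Set.mem_union,
        Set.mem_compl_iff]
      tauto
    rw [heq]
    have hsplit := m_split μ hμ (P ∩ f ⁻¹' Ustar) (f ⁻¹' blocksX)
    have heq2 : P ∩ f ⁻¹' Ustar ∩ f ⁻¹' blocksX = P ∩ f ⁻¹' blocksX := by
      ext x
      simp only [Set.mem_inter_iff, Set.mem_preimage, and_assoc]
      constructor
      · rintro ⟨h1, _, h3⟩; exact ⟨h1, h3⟩
      · rintro ⟨h1, h3⟩; exact ⟨h1, Set.preimage_mono hblocksUstar h3, h3⟩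
    rw [heq2, hPB] at hsplit
    linarith

/-- Restricting a Q⁺-measure to a positive-measure selector of a critical partition
gives an almost Q-measure, and a Q-measure if the original measure is a P-measure. -/
theorem stmt_18 (μ : Set ℕ → ℝ) (hμ : IsMeasure μ) (hfree : IsFree μ) (ε : ℝ)
    (hε0 : 0 < ε) (hε1 : ε ≤ 1)
    (h1 : ∀ δ : ℝ, δ < ε → ∀ A : ℕ → Set ℕ, IsPartition A → (∀ n, (A n).Finite) →
      ∃ T : Set ℕ, IsSelector T A ∧ δ ≤ μ T)
    (A : ℕ → Set ℕ) (hA : IsPartition A) (hAfin : ∀ n, (A n).Finite)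
    (h2 : ∀ T : Set ℕ, IsSelector T A → μ T ≤ ε)
    (S : Set ℕ) (hS : IsSelector S A) (hSpos : 0 < μ S) :
    IsAlmostQMeasure (fun B => μ (S ∩ B) / μ S) ∧
      (IsPMeasure μ → IsQMeasure (fun B => μ (S ∩ B) / μ S)) := by
  classical
  obtain ⟨hbnd, huniv, hadd⟩ := id hμ
  obtain ⟨hAdis, hAuniv⟩ := hA
  -- monotonicity of μ
  have hmono : ∀ X Y : Set ℕ, X ⊆ Y → μ X ≤ μ Y := by
    intro X Y hXY
    have hd : Disjoint X (Y \ X) := Set.disjoint_sdiff_right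
    have h := hadd X (Y \ X) hd
    rw [Set.union_diff_cancel hXY] at h
    have h0 := (hbnd (Y \ X)).1
    linarith
  -- index of the A-piece of a point
  have hamem : ∀ x : ℕ, ∃ n, x ∈ A n := by
    intro x
    have hx : x ∈ ⋃ n, A n := by rw [hAuniv]; trivial
    exact Set.mem_iUnion.mp hx
  choose p hp using hamem
  have hpuniq : ∀ x n, x ∈ A n → p x = n := by
    intro x n hxn
    by_contra hne
    exact Set.disjoint_left.mp (hAdis hne) (hp x) hxn
  -- KEY LEMMA: for every partition B into finite sets and every η > 0 there is a
  -- selector E ⊆ S of B with μ E ≥ μ S - η.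
  have key : ∀ B : ℕ → Set ℕ, IsPartition B → (∀ m, (B m).Finite) → ∀ η : ℝ, 0 < η →
      ∃ E : Set ℕ, E ⊆ S ∧ IsSelector E B ∧ μ S - η ≤ μ E := by
    intro B hB hBfin η hη
    obtain ⟨hBdis, hBuniv⟩ := hB
    have hbmem : ∀ x : ℕ, ∃ m, x ∈ B m := by
      intro x
      have hx : x ∈ ⋃ n, B n := by rw [hBuniv]; trivial
      exact Set.mem_iUnion.mp hx
    choose f hf using hbmem
    have hfuniq : ∀ x m, x ∈ B m → f x = m := by
      intro x m hxm
      by_contra hne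
      exact Set.disjoint_left.mp (hBdis hne) (hf x) hxm
    -- the coarsening D of A: group the A-pieces whose (unique) S-point lies in the
    -- same B-piece; the A-pieces avoiding S stay alone.
    set g : ℕ → ℕ := fun n => if h : (S ∩ A n).Nonempty then 2 * f h.choose else 2 * n + 1
      with hg
    set D : ℕ → Set ℕ := fun k => ⋃ n ∈ {n : ℕ | g n = k}, A n with hD
    have hDsub : ∀ n, A n ⊆ D (g n) := by
      intro n x hx
      exact Set.mem_biUnion rfl hx
    have hDmem' : ∀ x k, x ∈ D k → ∃ n, g n = k ∧ x ∈ A n := by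
      intro x k hx
      simp only [hD, Set.mem_iUnion] at hx
      obtain ⟨n, hn, hxn⟩ := hx
      exact ⟨n, hn, hxn⟩
    have hDpart : IsPartition D := by
      constructor
      · intro k k' hkk'
        simp only [Function.onFun]
        rw [Set.disjoint_left]
        intro x hxk hxk'
        obtain ⟨n, hgn, hxn⟩ := hDmem' x k hxk
        obtain ⟨n', hgn', hxn'⟩ := hDmem' x k' hxk'
        have hnn' : n = n' := by
          by_contra hne
          exact Set.disjoint_left.mp (hAdis hne) hxn hxn'
        exact hkk' (by rw [← hgn, hnn', hgn'])
      · apply Set.eq_univ_of_forall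
        intro x
        exact Set.mem_iUnion.mpr ⟨g (p x), hDsub (p x) (hp x)⟩
    have hIfin : ∀ k, {n : ℕ | g n = k}.Finite := by
      intro k
      by_cases hcase : ∃ n₀, g n₀ = k ∧ ¬ (S ∩ A n₀).Nonempty
      · obtain ⟨n₀, hn₀, hne₀⟩ := hcase
        have : {n : ℕ | g n = k} ⊆ {n₀} := by
          intro n hn
          simp only [Set.mem_setOf_eq] at hn
          by_cases hne : (S ∩ A n).Nonempty
          · exfalso
            have h1' : g n = 2 * f hne.choose := by simp only [hg]; rw [dif_pos hne]
            have h2' : g n₀ = 2 * n₀ + 1 := by simp only [hg]; rw [dif_neg hne₀]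
            omega
          · have h1' : g n = 2 * n + 1 := by simp only [hg]; rw [dif_neg hne]
            have h2' : g n₀ = 2 * n₀ + 1 := by simp only [hg]; rw [dif_neg hne₀]
            simp only [Set.mem_singleton_iff]
            omega
        exact (Set.finite_singleton n₀).subset this
      · push_neg at hcase
        have hne : ∀ n, g n = k → (S ∩ A n).Nonempty := fun n hn => hcase n hn
        set φ : ℕ → ℕ := fun n => if h : (S ∩ A n).Nonempty then h.choose else 0 with hφ
        have hφmem : ∀ n, g n = k → φ n ∈ S ∩ A n := by
          intro n hn
          have h := hne n hn
          simp only [hφ]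
          rw [dif_pos h]
          exact h.choose_spec
        have hinj : Set.InjOn φ {n : ℕ | g n = k} := by
          intro n hn n' hn' heq
          simp only [Set.mem_setOf_eq] at hn hn'
          by_contra hnen
          have h1' := (hφmem n hn).2
          have h2' := (hφmem n' hn').2
          rw [heq] at h1'
          exact Set.disjoint_left.mp (hAdis hnen) h1' h2'
        have himg : φ '' {n : ℕ | g n = k} ⊆ B (k / 2) := by
          rintro y ⟨n, hn, rfl⟩
          simp only [Set.mem_setOf_eq] at hn
          have hne' := hne n hn
          have hgn : g n = 2 * f hne'.choose := by simp only [hg]; rw [dif_pos hne']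
          have hφn : φ n = hne'.choose := by simp only [hφ]; rw [dif_pos hne']
          have : k / 2 = f hne'.choose := by omega
          rw [hφn, this]
          exact hf _
        exact Set.Finite.of_finite_image ((hBfin (k / 2)).subset himg) hinj
    have hDfin : ∀ k, (D k).Finite :=
      fun k => Set.Finite.biUnion (hIfin k) (fun n _ => hAfin n)
    -- apply h1 to D
    obtain ⟨T, hTsel, hTμ⟩ := h1 (ε - η) (by linarith) D hDpart hDfin
    -- the union of the A-pieces touched by T
    set Q : Set ℕ := ⋃ n ∈ {n : ℕ | (T ∩ A n).Nonempty}, A n with hQ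
    have hTQ : T ⊆ Q := by
      intro x hx
      exact Set.mem_biUnion (show (T ∩ A (p x)).Nonempty from ⟨x, hx, hp x⟩) (hp x)
    have hQmem : ∀ x, x ∈ Q → (T ∩ A (p x)).Nonempty := by
      intro x hx
      simp only [hQ, Set.mem_iUnion] at hx
      obtain ⟨n, hn, hxn⟩ := hx
      rwa [hpuniq x n hxn]
    -- W = T together with the S-points of the untouched pieces is a selector of A
    set W : Set ℕ := T ∪ (S \ Q) with hW
    have hWsel : IsSelector W A := by
      intro n
      by_cases hTn : (T ∩ A n).Nonempty
      · have hAQ : A n ⊆ Q := Set.subset_biUnion_of_mem hTn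
        have hWA : W ∩ A n = T ∩ A n := by
          ext x
          constructor
          · rintro ⟨hxW, hxA⟩
            rcases hxW with hxT | hxSQ
            · exact ⟨hxT, hxA⟩
            · exact absurd (hAQ hxA) hxSQ.2
          · rintro ⟨hxT, hxA⟩
            exact ⟨Or.inl hxT, hxA⟩
        rw [hWA]
        exact (hTsel (g n)).anti (Set.inter_subset_inter_right T (hDsub n))
      · have hTn' : T ∩ A n = ∅ := Set.not_nonempty_iff_eq_empty.mp hTn
        apply (hS n).anti
        rintro x ⟨hxW, hxA⟩
        rcases hxW with hxT | hxSQ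
        · exact absurd (Set.mem_inter hxT hxA) (by rw [hTn']; exact Set.notMem_empty x)
        · exact ⟨hxSQ.1, hxA⟩
    have hWμ : μ W ≤ ε := h2 W hWsel
    have hdisjT : Disjoint T (S \ Q) := Set.disjoint_sdiff_right.mono_left hTQ
    have hWadd : μ W = μ T + μ (S \ Q) := hadd T (S \ Q) hdisjT
    have hSsplit : μ (S ∩ Q) + μ (S \ Q) = μ S := by
      have hd : Disjoint (S ∩ Q) (S \ Q) :=
        Set.disjoint_sdiff_right.mono_left Set.inter_subset_right
      have h := hadd (S ∩ Q) (S \ Q) hd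
      rw [Set.inter_union_diff] at h
      linarith
    refine ⟨S ∩ Q, Set.inter_subset_left, ?_, by linarith⟩
    -- S ∩ Q is a selector of B
    intro m x hx y hy
    obtain ⟨⟨hxS, hxQ⟩, hxB⟩ := hx
    obtain ⟨⟨hyS, hyQ⟩, hyB⟩ := hy
    have hSx : (S ∩ A (p x)).Nonempty := ⟨x, hxS, hp x⟩
    have hSy : (S ∩ A (p y)).Nonempty := ⟨y, hyS, hp y⟩
    have hgx : g (p x) = 2 * m := by
      have hcx : hSx.choose = x := hS (p x) hSx.choose_spec ⟨hxS, hp x⟩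
      simp only [hg]
      rw [dif_pos hSx, hcx, hfuniq x m hxB]
    have hgy : g (p y) = 2 * m := by
      have hcy : hSy.choose = y := hS (p y) hSy.choose_spec ⟨hyS, hp y⟩
      simp only [hg]
      rw [dif_pos hSy, hcy, hfuniq y m hyB]
    obtain ⟨t, htT, htA⟩ := hQmem x hxQ
    obtain ⟨t', ht'T, ht'A⟩ := hQmem y hyQ
    have htD : t ∈ T ∩ D (2 * m) := ⟨htT, by rw [← hgx]; exact hDsub (p x) htA⟩
    have ht'D : t' ∈ T ∩ D (2 * m) := ⟨ht'T, by rw [← hgy]; exact hDsub (p y) ht'A⟩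
    have htt' : t = t' := hTsel (2 * m) htD ht'D
    have hpxy : p x = p y := by
      rw [← hpuniq t (p x) htA, htt', hpuniq t' (p y) ht'A]
    exact hS (p x) ⟨hxS, hp x⟩ ⟨hyS, by rw [hpxy]; exact hp y⟩
  -- Part 1: almost Q-measure
  have part1 : IsAlmostQMeasure (fun B => μ (S ∩ B) / μ S) := by
    intro B hB hBfin δ hδ
    set δ' : ℝ := max δ 0 with hδ'
    have hδ'0 : 0 ≤ δ' := le_max_right _ _
    have hδ'1 : δ' < 1 := max_lt hδ one_pos
    have hη : 0 < μ S * (1 - δ') / 2 := by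
      apply div_pos _ (by norm_num)
      exact mul_pos hSpos (by linarith)
    obtain ⟨E, hES, hEsel, hEμ⟩ := key B hB hBfin _ hη
    refine ⟨E, hEsel, ?_⟩
    show δ < μ (S ∩ E) / μ S
    rw [Set.inter_eq_right.mpr hES, lt_div_iff₀ hSpos]
    have hδδ' : δ ≤ δ' := le_max_left _ _
    nlinarith [hSpos, hδ'1, hδ'0, hδδ', hEμ]
  refine ⟨part1, ?_⟩
  -- Part 2: Q-measure, assuming μ is a P-measure
  intro hP
  intro B hB hBfin
  -- the block-index map of B
  have hbmem : ∀ x : ℕ, ∃ m, x ∈ B m := by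
    intro x
    have hx : x ∈ ⋃ n, B n := by rw [hB.2]; trivial
    exact Set.mem_iUnion.mp hx
  choose f hf using hbmem
  have hfuniq : ∀ x m, x ∈ B m → f x = m := by
    intro x m hxm
    by_contra hne
    exact Set.disjoint_left.mp (hB.1 hne) (hf x) hxm
  have hffin : ∀ M : Set ℕ, M.Finite → (f ⁻¹' M).Finite := by
    intro M hM
    have hsub : f ⁻¹' M ⊆ ⋃ m ∈ M, B m := fun x hx => Set.mem_biUnion hx (hf x)
    exact (hM.biUnion (fun m _ => hBfin m)).subset hsub
  -- relativized capture: inside any Y, a selector of B can pick up almost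
  -- all of the mass of Y ∩ S
  have rel : ∀ Y : Set ℕ, ∀ η : ℝ, 0 < η →
      ∃ F : Set ℕ, F ⊆ Y ∩ S ∧ IsSelector F B ∧ μ (Y ∩ S) - η ≤ μ F := by
    intro Y η hη
    set CY : ℕ → Set ℕ := fun k => if k % 2 = 0 then B (k / 2) ∩ Y else B (k / 2) \ Y
      with hCY
    have hCYsub : ∀ k, CY k ⊆ B (k / 2) := by
      intro k
      simp only [hCY]
      by_cases h : k % 2 = 0
      · rw [if_pos h]; exact Set.inter_subset_left
      · rw [if_neg h]; exact Set.diff_subset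
    have hCYeven : ∀ m, CY (2 * m) = B m ∩ Y := by
      intro m
      simp only [hCY]
      rw [if_pos (by omega), show 2 * m / 2 = m by omega]
    have hCYodd : ∀ m, CY (2 * m + 1) = B m \ Y := by
      intro m
      simp only [hCY]
      rw [if_neg (by omega), show (2 * m + 1) / 2 = m by omega]
    have hCYY : ∀ k x, x ∈ CY k → (k % 2 = 0 → x ∈ Y) ∧ (k % 2 ≠ 0 → x ∉ Y) := by
      intro k x hx
      simp only [hCY] at hx
      by_cases h : k % 2 = 0
      · rw [if_pos h] at hx
        exact ⟨fun _ => hx.2, fun h' => absurd h h'⟩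
      · rw [if_neg h] at hx
        exact ⟨fun h' => absurd h' h, fun _ => hx.2⟩
    have hCYpart : IsPartition CY := by
      constructor
      · intro k k' hkk'
        simp only [Function.onFun]
        rw [Set.disjoint_left]
        intro x hxk hxk'
        have h1 : f x = k / 2 := hfuniq x _ (hCYsub k hxk)
        have h2 : f x = k' / 2 := hfuniq x _ (hCYsub k' hxk')
        have h3 : k / 2 = k' / 2 := by omega
        by_cases hpar : k % 2 = k' % 2
        · exact hkk' (by omega)
        · by_cases h : k % 2 = 0
          · exact ((hCYY k' x hxk').2 (by omega)) ((hCYY k x hxk).1 h)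
          · exact ((hCYY k x hxk).2 h) ((hCYY k' x hxk').1 (by omega))
      · apply Set.eq_univ_of_forall
        intro x
        rw [Set.mem_iUnion]
        by_cases hx : x ∈ Y
        · exact ⟨2 * f x, by rw [hCYeven]; exact ⟨hf x, hx⟩⟩
        · exact ⟨2 * f x + 1, by rw [hCYodd]; exact ⟨hf x, hx⟩⟩
    have hCYfin : ∀ k, (CY k).Finite := fun k => (hBfin (k / 2)).subset (hCYsub k)
    obtain ⟨E', hE'S, hE'sel, hE'μ⟩ := key CY hCYpart hCYfin η hη
    refine ⟨E' ∩ Y, ?_, ?_, ?_⟩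
    · rintro x ⟨hx1, hx2⟩
      exact ⟨hx2, hE'S hx1⟩
    · intro m
      apply (hE'sel (2 * m)).anti
      rintro x ⟨⟨hxE', hxY⟩, hxB⟩
      exact ⟨hxE', by rw [hCYeven]; exact ⟨hxB, hxY⟩⟩
    · have hsplit := m_split μ hμ E' Y
      have hsub : E' \ Y ⊆ S \ (Y ∩ S) := by
        rintro x ⟨hx1, hx2⟩
        exact ⟨hE'S hx1, fun h => hx2 h.1⟩
      have hsplit2 := m_split μ hμ S (Y ∩ S)
      rw [Set.inter_eq_right.mpr Set.inter_subset_right] at hsplit2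
      have h1 : μ (E' \ Y) ≤ μ S - μ (Y ∩ S) := by
        have := m_mono μ hμ hsub
        linarith
      linarith
  -- one step of the exhaustion: from a region T ⊆ S, extract a selector K
  -- supported on a set of blocks M carrying exactly the T-mass of those blocks
  have step : ∀ T : Set ℕ, T ⊆ S → ∀ η : ℝ, 0 < η →
      ∃ KM : Set ℕ × Set ℕ, KM.1 ⊆ T ∩ f ⁻¹' KM.2 ∧ IsSelector KM.1 B ∧
        μ (T \ f ⁻¹' KM.2) = μ T - μ KM.1 ∧ μ T - η ≤ μ KM.1 := by
    intro T hTS η hη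
    obtain ⟨P, hPsub, hPsel, hPμ⟩ := rel T η hη
    rw [Set.inter_eq_left.mpr hTS] at hPsub hPμ
    set R : Set ℕ := T \ P with hR
    have hα : ∀ η' : ℝ, 0 < η' →
        ∃ M : Set ℕ, μ (P \ f ⁻¹' M) ≤ η' ∧ μ (R ∩ f ⁻¹' M) ≤ η' := by
      intro η' hη'
      obtain ⟨F', hF'sub, hF'sel, hF'μ⟩ := rel T η' hη'
      rw [Set.inter_eq_left.mpr hTS] at hF'sub hF'μ
      have hTF' : μ (T \ F') ≤ η' := by
        have hsplit := m_split μ hμ T F'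
        rw [Set.inter_eq_right.mpr hF'sub] at hsplit
        linarith
      refine ⟨f '' (F' ∩ P), ?_, ?_⟩
      · refine le_trans (m_mono μ hμ ?_) hTF'
        rintro x ⟨hxP, hxM⟩
        refine ⟨hPsub hxP, ?_⟩
        intro hxF'
        exact hxM ⟨x, ⟨hxF', hxP⟩, rfl⟩
      · refine le_trans (m_mono μ hμ ?_) hTF'
        rintro x ⟨hxR, hxM⟩
        obtain ⟨y, ⟨hyF', hyP⟩, hyfx⟩ := hxM
        refine ⟨hxR.1, ?_⟩
        intro hxF'
        have hyB : y ∈ B (f x) := by rw [← hyfx]; exact hf y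
        have hxy : x = y := hF'sel (f x) ⟨hxF', hf x⟩ ⟨hyF', hyB⟩
        exact hxR.2 (hxy ▸ hyP)
    obtain ⟨M, hM1, hM2⟩ := eps_lemma μ hμ hfree hP f hffin P R hα
    refine ⟨(P ∩ f ⁻¹' M, M), Set.inter_subset_inter_left _ hPsub, ?_, ?_, ?_⟩
    · intro m
      exact (hPsel m).anti (Set.inter_subset_inter_left _ Set.inter_subset_left)
    · have hsplitT := m_split μ hμ T (f ⁻¹' M)
      have hTM : T ∩ f ⁻¹' M = (P ∩ f ⁻¹' M) ∪ (R ∩ f ⁻¹' M) := by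
        ext x
        simp only [Set.mem_inter_iff, Set.mem_union, hR, Set.mem_diff]
        by_cases hxP : x ∈ P
        · constructor
          · rintro ⟨h1, h2⟩; exact Or.inl ⟨hxP, h2⟩
          · rintro (⟨_, h2⟩ | ⟨⟨h1, _⟩, h2⟩)
            · exact ⟨hPsub hxP, h2⟩
            · exact ⟨h1, h2⟩
        · constructor
          · rintro ⟨h1, h2⟩; exact Or.inr ⟨⟨h1, hxP⟩, h2⟩
          · rintro (⟨h1, h2⟩ | ⟨⟨h1, _⟩, h2⟩)
            · exact absurd h1 hxP
            · exact ⟨h1, h2⟩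
      have hdisj : Disjoint (P ∩ f ⁻¹' M) (R ∩ f ⁻¹' M) := by
        rw [Set.disjoint_left]
        rintro x ⟨hxP, _⟩ ⟨hxR, _⟩
        exact hxR.2 hxP
      have haddPR : μ (T ∩ f ⁻¹' M) = μ (P ∩ f ⁻¹' M) + μ (R ∩ f ⁻¹' M) := by
        rw [hTM]; exact hadd _ _ hdisj
      rw [haddPR, hM1] at hsplitT
      linarith
    · have hsplitP := m_split μ hμ P (f ⁻¹' M)
      rw [hM2] at hsplitP
      linarith
  -- iterate the step
  have hpow : ∀ i : ℕ, (0:ℝ) < (1/2) ^ i := fun i => pow_pos (by norm_num) i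
  choose stepKM hstep1 hstep2 hstep3 hstep4 using step
  set seq : ℕ → {T : Set ℕ // T ⊆ S} := fun i => Nat.rec ⟨S, subset_rfl⟩
    (fun i T => ⟨T.1 \ f ⁻¹' (stepKM T.1 T.2 ((1/2) ^ i) (hpow i)).2,
      Set.diff_subset.trans T.2⟩) i with hseq
  set Ki : ℕ → Set ℕ := fun i => (stepKM (seq i).1 (seq i).2 ((1/2) ^ i) (hpow i)).1
    with hKi
  set Mi : ℕ → Set ℕ := fun i => (stepKM (seq i).1 (seq i).2 ((1/2) ^ i) (hpow i)).2
    with hMi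
  have hseqsucc : ∀ i, (seq (i + 1)).1 = (seq i).1 \ f ⁻¹' (Mi i) := fun i => rfl
  have hKisub : ∀ i, Ki i ⊆ (seq i).1 ∩ f ⁻¹' (Mi i) :=
    fun i => hstep1 (seq i).1 (seq i).2 ((1/2) ^ i) (hpow i)
  have hKisel : ∀ i, IsSelector (Ki i) B :=
    fun i => hstep2 (seq i).1 (seq i).2 ((1/2) ^ i) (hpow i)
  have hrec : ∀ i, μ ((seq (i + 1)).1) = μ ((seq i).1) - μ (Ki i) := by
    intro i
    rw [hseqsucc i]
    exact hstep3 (seq i).1 (seq i).2 ((1/2) ^ i) (hpow i)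
  have hKlb : ∀ i, μ ((seq i).1) - (1/2) ^ i ≤ μ (Ki i) :=
    fun i => hstep4 (seq i).1 (seq i).2 ((1/2) ^ i) (hpow i)
  have hseqdec : ∀ i, (seq (i + 1)).1 ⊆ (seq i).1 := by
    intro i
    rw [hseqsucc i]
    exact Set.diff_subset
  have hseqchain : ∀ i j, i ≤ j → (seq j).1 ⊆ (seq i).1 := by
    intro i j hij
    induction j, hij using Nat.le_induction with
    | base => exact subset_rfl
    | succ n hn ih => exact (hseqdec n).trans ih
  have hseqM : ∀ i j, i < j → (seq j).1 ⊆ (f ⁻¹' (Mi i))ᶜ := by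
    intro i j hij
    refine (hseqchain (i + 1) j hij).trans ?_
    rw [hseqsucc i]
    intro x hx
    exact hx.2
  have hKdisjB : ∀ i j, i < j → ∀ x y, x ∈ Ki i → y ∈ Ki j → f x ≠ f y := by
    intro i j hij x y hx hy hfxy
    have h1 : f x ∈ Mi i := (hKisub i hx).2
    have h2 : y ∈ (seq j).1 := (hKisub j hy).1
    have h3 : f y ∉ Mi i := hseqM i j hij h2
    rw [hfxy] at h1
    exact h3 h1
  set E : Set ℕ := ⋃ i, Ki i with hE
  have hES2 : E ⊆ S := by
    rintro x hx
    obtain ⟨i, hi⟩ := Set.mem_iUnion.mp hx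
    exact (seq i).2 (hKisub i hi).1
  have hEsel2 : IsSelector E B := by
    intro m x hx y hy
    obtain ⟨hxE, hxB⟩ := hx
    obtain ⟨hyE, hyB⟩ := hy
    obtain ⟨i, hxi⟩ := Set.mem_iUnion.mp hxE
    obtain ⟨j, hyj⟩ := Set.mem_iUnion.mp hyE
    rcases Nat.lt_trichotomy i j with h | h | h
    · exact absurd (by rw [hfuniq x m hxB, hfuniq y m hyB]) (hKdisjB i j h x y hxi hyj)
    · subst h
      exact hKisel i m ⟨hxi, hxB⟩ ⟨hyj, hyB⟩
    · exact absurd (by rw [hfuniq y m hyB, hfuniq x m hxB]) (hKdisjB j i h y x hyj hxi)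
  -- the measure of E is exactly μ S
  have hKdisj : ∀ i j, i < j → Disjoint (Ki i) (Ki j) := by
    intro i j hij
    rw [Set.disjoint_left]
    intro x hxi hxj
    exact hKdisjB i j hij x x hxi hxj rfl
  have hparts : ∀ I, μ (⋃ i ∈ Finset.range I, Ki i) = μ S - μ ((seq I).1) := by
    intro I
    induction I with
    | zero =>
      have h1 : (⋃ i ∈ Finset.range 0, Ki i) = (∅ : Set ℕ) := by simp
      have h2 : μ (∅ : Set ℕ) = 0 := hfree ∅ Set.finite_empty
      have h3 : (seq 0).1 = S := rfl
      rw [h1, h2, h3]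
      ring
    | succ I ih =>
      have hU : (⋃ i ∈ Finset.range (I + 1), Ki i) =
          (⋃ i ∈ Finset.range I, Ki i) ∪ Ki I := by
        rw [Finset.range_add_one, Finset.set_biUnion_insert, Set.union_comm]
      have hdis : Disjoint (⋃ i ∈ Finset.range I, Ki i) (Ki I) := by
        rw [Set.disjoint_left]
        intro x hx hxI
        rw [Set.mem_iUnion₂] at hx
        obtain ⟨i, hi, hxi⟩ := hx
        rw [Finset.mem_range] at hi
        exact Set.disjoint_left.mp (hKdisj i I hi) hxi hxI
      rw [hU, hadd _ _ hdis, ih, hrec I]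
      ring
  have hEfull : μ E = μ S := by
    apply le_antisymm (m_mono μ hμ hES2)
    by_contra h
    push_neg at h
    obtain ⟨n, hn⟩ := exists_pow_lt_of_lt_one (by linarith : (0:ℝ) < μ S - μ E)
      (by norm_num : (1/2 : ℝ) < 1)
    have h1 : μ (⋃ i ∈ Finset.range (n + 1), Ki i) ≤ μ E := by
      apply m_mono μ hμ
      intro x hx
      rw [Set.mem_iUnion₂] at hx
      obtain ⟨i, _, hxi⟩ := hx
      exact Set.mem_iUnion.mpr ⟨i, hxi⟩
    have h2 := hparts (n + 1)
    have h3 : μ ((seq (n + 1)).1) ≤ (1/2) ^ n := by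
      have := hrec n
      have := hKlb n
      linarith
    linarith
  refine ⟨E, hEsel2, ?_⟩
  show μ (S ∩ E) / μ S = 1
  rw [Set.inter_eq_right.mpr hES2, hEfull]
  exact div_self (ne_of_gt hSpos)
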